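/- For integers m ≥ 1, n ≥ 0, and k ≥ 0: sum over l from k to mn of C(n,l;m) · binomial(l,k) = sum over j from 0 to n of (-1)^(n-j) · binomial(n,j) · binomial((m+1)·j, k+n), identified as the coefficient of t^k in (p_m(1+t))^n. -/

import Mathlib

open Polynomial Finset

/-- Polynomial (extended binomial) coefficient: the coefficient of `t^k` in
`(1 + t + ⋯ + t^m)^n`, defined to be `0` for negative `k`. -/
noncomputable def pc (m n : ℕ) (k : ℤ) : ℤ :=
  if 0 ≤ k then
    ((∑ i ∈ Finset.range (m + 1), (Polynomial.X : Polynomial ℤ) ^ i) ^ n).coeff k.toNat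
  else 0

theorem pc_binom_sum2 (m n k : ℕ) (hm : 1 ≤ m) :
    ∑ l ∈ Finset.Icc k (m * n), pc m n l * (Nat.choose l k : ℤ) =
      ∑ j ∈ Finset.range (n + 1),
        (-1 : ℤ) ^ (n - j) * (Nat.choose n j : ℤ) * (Nat.choose ((m + 1) * j) (k + n) : ℤ) := by
  set P : Polynomial ℤ := ∑ i ∈ Finset.range (m + 1), X ^ i with hP
  have hpc : ∀ l : ℕ, pc m n l = (P ^ n).coeff l := by
    intro l
    simp [pc, hP]
  have hdegP : P.natDegree ≤ m := by
    apply Polynomial.natDegree_sum_le_of_forall_le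
    intro i hi
    simpa using Nat.lt_succ_iff.mp (Finset.mem_range.mp hi)
  have hdeg : (P ^ n).natDegree ≤ m * n :=
    le_trans (Polynomial.natDegree_pow_le) (by nlinarith)
  -- LHS equals coefficient of (P^n).comp (X+1) at k
  have hL : (∑ l ∈ Finset.Icc k (m * n), pc m n l * (Nat.choose l k : ℤ)) =
      ((P ^ n).comp (X + 1)).coeff k := by
    have h1 : ((P ^ n).comp (X + 1)).coeff k = (hasseDeriv k (P ^ n)).eval 1 := by
      rw [← Polynomial.taylor_coeff, Polynomial.taylor_apply, Polynomial.C_1]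
    rw [h1, Polynomial.eval_eq_sum_range' (n := m * n + 1)
      (lt_of_le_of_lt (le_trans (Polynomial.natDegree_hasseDeriv_le _ _) (Nat.sub_le _ _ |>.trans hdeg)) (Nat.lt_succ_self _)) 1]
    simp only [Polynomial.hasseDeriv_coeff, one_pow, mul_one]
    have hext : (∑ l ∈ Finset.Icc k (m * n), pc m n l * (Nat.choose l k : ℤ)) =
        ∑ l ∈ Finset.Icc k (m * n + k), pc m n l * (Nat.choose l k : ℤ) := by
      apply Finset.sum_subset
      · exact Finset.Icc_subset_Icc_right (Nat.le_add_right _ _)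
      · intro x hx hx'
        simp only [Finset.mem_Icc, not_and, not_le] at hx hx'
        have hxgt : m * n < x := hx' hx.1
        rw [hpc, Polynomial.coeff_eq_zero_of_natDegree_lt (lt_of_le_of_lt hdeg hxgt), zero_mul]
    rw [hext, ← Finset.Ico_add_one_right_eq_Icc, Finset.sum_Ico_eq_sum_range]
    have : m * n + k + 1 - k = m * n + 1 := by omega
    rw [this]
    apply Finset.sum_congr rfl
    intro i _
    rw [hpc]
    push_cast
    ring_nf
  rw [hL]
  -- key identity: X * (P.comp (X+1)) = (X+1)^(m+1) - 1
  have hgeom : P * (X - 1) = X ^ (m + 1) - 1 := geom_sum_mul X (m + 1)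
  have hkey : (P.comp (X + 1)) * X = (X + 1) ^ (m + 1) - 1 := by
    have := congrArg (fun q => q.comp (X + 1)) hgeom
    simpa using this
  have hQn : ((P ^ n).comp (X + 1)) * X ^ n = ((X + 1) ^ (m + 1) - 1) ^ n := by
    rw [Polynomial.pow_comp, ← mul_pow, hkey]
  have hco : ((P ^ n).comp (X + 1)).coeff k = ((((X : Polynomial ℤ) + 1) ^ (m + 1) - 1) ^ n).coeff (k + n) := by
    rw [← hQn, Polynomial.coeff_mul_X_pow]
  rw [hco]
  have hexp : ((X + 1) ^ (m + 1) - 1 : Polynomial ℤ) ^ n =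
      ∑ j ∈ Finset.range (n + 1),
        (X + 1) ^ ((m + 1) * j) * C ((-1 : ℤ) ^ (n - j) * (Nat.choose n j : ℤ)) := by
    rw [sub_eq_add_neg, add_pow]
    apply Finset.sum_congr rfl
    intro j _
    rw [← pow_mul]
    simp only [map_mul, map_pow, map_neg, map_one, Polynomial.C_eq_natCast]
    ring
  rw [hexp, Polynomial.finset_sum_coeff]
  apply Finset.sum_congr rfl
  intro j _
  rw [Polynomial.coeff_mul_C, Polynomial.coeff_X_add_one_pow]
  ring
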